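/- Let A be formally smooth relative to S (i.e., Ω¹_S A is a finitely generated projective A^e-module), let ∇ be an S^e-linear connection on Ω¹_S A, and define the triple divergence TDiv^∇(Θ) = Tr(i_{Θ^e}∇ − L_Θ) ∈ |trip(A)| for Θ ∈ DDer_S(A). Then the triple divergence lifts the double divergence: |mult| ∘ TDiv^∇ = Div^∇ ∘ mult_*, where mult_*: DDer_S(A) → Der_S(A) sends Θ to mult∘Θ and Div^∇(f) = Tr((i_{f^e}⊗id)∘∇ − L_f) ∈ |A^e|. -/

import Mathlib

set_option synthInstance.maxHeartbeats 1000000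
set_option maxHeartbeats 2000000

open TensorProduct MulOpposite LinearMap

noncomputable section

variable (K A : Type*) [Field K] [CharZero K] [Ring A] [Algebra K A]

/-- The enveloping algebra `Aᵉ = A ⊗ Aᵒᵖ`. -/
abbrev Env := A ⊗[K] Aᵐᵒᵖ

/-- First summand `(A⊗A)⊗Aᵒᵖ` of the triple `trip(A)`. -/
abbrev Trip₁ := (A ⊗[K] A) ⊗[K] Aᵐᵒᵖ

/-- Second summand `A⊗(Aᵒᵖ⊗Aᵒᵖ)` of the triple `trip(A)`. -/
abbrev Trip₂ := A ⊗[K] (Aᵐᵒᵖ ⊗[K] Aᵐᵒᵖ)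

/-- `trip(A) = Trip₁ ⊕ Trip₂` (componentwise a ring). -/
abbrev Trip := Trip₁ K A × Trip₂ K A

instance : AddCommGroup (Trip K A) := by exact Prod.instAddCommGroup

/-- `Θ ↦ Θᵒᵖ`. -/
def ddOp (Θ : A →ₗ[K] A ⊗[K] A) : Aᵐᵒᵖ →ₗ[K] Aᵐᵒᵖ ⊗[K] Aᵐᵒᵖ :=
  ((TensorProduct.comm K Aᵐᵒᵖ Aᵐᵒᵖ).toLinearMap ∘ₗ
      TensorProduct.map (opLinearEquiv K).toLinearMap (opLinearEquiv K).toLinearMap) ∘ₗ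
    Θ ∘ₗ (opLinearEquiv K (M := A)).symm.toLinearMap

/-- First component of `Θᵉ : Aᵉ → trip(A)`: `a⊗b̄ ↦ Θ(a)⊗b̄`. -/
def thetaE₁ (Θ : A →ₗ[K] A ⊗[K] A) : Env K A →ₗ[K] Trip₁ K A := rTensor Aᵐᵒᵖ Θ

/-- Second component of `Θᵉ : Aᵉ → trip(A)`: `a⊗b̄ ↦ a⊗Θᵒᵖ(b̄)`. -/
def thetaE₂ (Θ : A →ₗ[K] A ⊗[K] A) : Env K A →ₗ[K] Trip₂ K A := lTensor A (ddOp K A Θ)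

/-- Left-action embedding `Aᵉ → Trip₁`, `a⊗b̄ ↦ (a⊗1)⊗b̄`. -/
def embL₁ : Env K A →ₗ[K] Trip₁ K A := rTensor Aᵐᵒᵖ ((TensorProduct.mk K A A).flip 1)

/-- Left-action embedding `Aᵉ → Trip₂`, `a⊗b̄ ↦ a⊗(b̄⊗1)`. -/
def embL₂ : Env K A →ₗ[K] Trip₂ K A := lTensor A ((TensorProduct.mk K Aᵐᵒᵖ Aᵐᵒᵖ).flip 1)

/-- Right-action embedding `Aᵉ → Trip₁`, `a⊗b̄ ↦ (1⊗a)⊗b̄`. -/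
def embR₁ : Env K A →ₗ[K] Trip₁ K A := rTensor Aᵐᵒᵖ (TensorProduct.mk K A A 1)

/-- Right-action embedding `Aᵉ → Trip₂`, `a⊗b̄ ↦ a⊗(1⊗b̄)`. -/
def embR₂ : Env K A →ₗ[K] Trip₂ K A := lTensor A (TensorProduct.mk K Aᵐᵒᵖ Aᵐᵒᵖ 1)

/-- The multiplication map `mult : trip(A) → Aᵉ`. -/
def multTrip : Trip K A →ₗ[K] Env K A :=
  LinearMap.coprod (rTensor Aᵐᵒᵖ (mul' K A)) (lTensor A (mul' K Aᵐᵒᵖ))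

/-- `a ↦ a ⊗ 1̄ ∈ Aᵉ`. -/
def inclE : A →ₗ[K] Env K A := (TensorProduct.mk K A Aᵐᵒᵖ).flip 1

/-- `u ↦ (u⊗1)⊗1̄ ∈ Trip₁` (the identification `A ⊗ Ω ≅ Trip₁ ⊗_{Aᵉ} Ω`). -/
def jay₁ : A →ₗ[K] Trip₁ K A :=
  ((TensorProduct.mk K (A ⊗[K] A) Aᵐᵒᵖ).flip 1) ∘ₗ ((TensorProduct.mk K A A).flip 1)

/-- `u ↦ 1⊗(ū⊗1̄) ∈ Trip₂` (the identification `Ω ⊗ A ≅ Trip₂ ⊗_{Aᵉ} Ω`). -/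
def jay₂ : A →ₗ[K] Trip₂ K A :=
  (TensorProduct.mk K A (Aᵐᵒᵖ ⊗[K] Aᵐᵒᵖ) 1) ∘ₗ
    (((TensorProduct.mk K Aᵐᵒᵖ Aᵐᵒᵖ).flip 1) ∘ₗ (opLinearEquiv K (M := A)).toLinearMap)

instance : AddCommGroup (Env K A ⊗[K] Env K A) := by
  exact TensorProduct.addCommGroup (R := K) (M := Env K A) (N := Env K A)

/-- `d_{Aᵉ} ξ = 1⊗ξ − ξ⊗1`, the universal derivation of `Aᵉ` (representative level). -/
def dEnv : Env K A →ₗ[K] Env K A ⊗[K] Env K A :=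
  TensorProduct.mk K (Env K A) (Env K A) 1 - (TensorProduct.mk K (Env K A) (Env K A)).flip 1

section OmegaModule

variable (Ω : Type*) [AddCommGroup Ω] [Module K Ω] [Module (Env K A) Ω]
  [IsScalarTower K (Env K A) Ω] [SMulCommClass (Env K A) K Ω]

instance : AddCommGroup (Trip₁ K A ⊗[K] Ω) := by
  exact TensorProduct.addCommGroup (R := K) (M := Trip₁ K A) (N := Ω)

instance : AddCommGroup (Trip₂ K A ⊗[K] Ω) := by
  exact TensorProduct.addCommGroup (R := K) (M := Trip₂ K A) (N := Ω)

instance : AddCommGroup (Env K A ⊗[K] Ω) := by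
  exact TensorProduct.addCommGroup (R := K) (M := Env K A) (N := Ω)

variable {K A Ω}

/-- For fixed `ξ ∈ Aᵉ`, the `K`-linear map `ω ↦ ξ • ω`. -/
def smulFix (ξ : Env K A) : Ω →ₗ[K] Ω where
  toFun ω := ξ • ω
  map_add' := smul_add ξ
  map_smul' k ω := smul_comm ξ k ω

/-- For fixed `ω`, the `K`-linear map `ξ ↦ ξ • ω`. -/
def smulOn (ω : Ω) : Env K A →ₗ[K] Ω where
  toFun ξ := ξ • ω
  map_add' ξ η := add_smul ξ η ω
  map_smul' k ξ := smul_assoc k ξ ω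

variable (K A Ω)

/-- Contraction against the derivation `Θᵉ`, first component:
`Ω¹Aᵉ → Trip₁`, `ξ dη ↦ (embL ξ * Θᵉ(η))₁`. -/
def contrT₁ (Θ : A →ₗ[K] A ⊗[K] A) : Env K A ⊗[K] Env K A →ₗ[K] Trip₁ K A :=
  TensorProduct.lift (((LinearMap.mul K (Trip₁ K A)) ∘ₗ embL₁ K A).compl₂ (thetaE₁ K A Θ))

/-- Contraction against the derivation `Θᵉ`, second component. -/
def contrT₂ (Θ : A →ₗ[K] A ⊗[K] A) : Env K A ⊗[K] Env K A →ₗ[K] Trip₂ K A :=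
  TensorProduct.lift (((LinearMap.mul K (Trip₂ K A)) ∘ₗ embL₂ K A).compl₂ (thetaE₂ K A Θ))

/-- Contraction against the derivation `fᵉ = f⊗id + id⊗fᵒᵖ` of `Aᵉ`:
`Ω¹Aᵉ → Aᵉ`, `ξ dη ↦ ξ * fᵉ(η)`. -/
def contrE (f : A →ₗ[K] A) : Env K A ⊗[K] Env K A →ₗ[K] Env K A :=
  TensorProduct.lift ((LinearMap.mul K (Env K A)).compl₂
    (rTensor Aᵐᵒᵖ f + lTensor A
      ((opLinearEquiv K (M := A)).toLinearMap ∘ₗ f ∘ₗ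
        (opLinearEquiv K (M := A)).symm.toLinearMap)))

end OmegaModule

/-- The commutator subspace `[Aᵉ,Aᵉ]`, so that `|Aᵉ| = Aᵉ/[Aᵉ,Aᵉ]`. -/
def envComm : Submodule K (Env K A) :=
  Submodule.span K {x | ∃ p q : Env K A, x = p * q - q * p}

section Aux

set_option linter.unusedSectionVars false

variable {K A}

lemma mulE_tmul (x a : A) (b c : Aᵐᵒᵖ) :
    LinearMap.mul K (Env K A) (x ⊗ₜ[K] b) (a ⊗ₜ[K] c) = (x * a) ⊗ₜ[K] (b * c) :=
  (LinearMap.mul_apply' _ _).trans (Algebra.TensorProduct.tmul_mul_tmul x a b c)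

lemma mulT₁_tmul (x y a p : A) (b c : Aᵐᵒᵖ) :
    LinearMap.mul K (Trip₁ K A) ((x ⊗ₜ[K] y) ⊗ₜ[K] b) ((a ⊗ₜ[K] p) ⊗ₜ[K] c) =
      ((x * a) ⊗ₜ[K] (y * p)) ⊗ₜ[K] (b * c) :=
  (LinearMap.mul_apply' _ _).trans
    ((Algebra.TensorProduct.tmul_mul_tmul _ _ b c).trans
      (congrArg (· ⊗ₜ[K] (b * c)) (Algebra.TensorProduct.tmul_mul_tmul x a y p)))

lemma mulT₂_tmul (x a : A) (c e u v : Aᵐᵒᵖ) :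
    LinearMap.mul K (Trip₂ K A) (x ⊗ₜ[K] (c ⊗ₜ[K] e)) (a ⊗ₜ[K] (u ⊗ₜ[K] v)) =
      (x * a) ⊗ₜ[K] ((c * u) ⊗ₜ[K] (e * v)) :=
  (LinearMap.mul_apply' _ _).trans
    ((Algebra.TensorProduct.tmul_mul_tmul x a _ _).trans
      (congrArg ((x * a) ⊗ₜ[K] ·) (Algebra.TensorProduct.tmul_mul_tmul c u e v)))

lemma m1_mul_embR (t : Trip₁ K A) (ξ : Env K A) :
    rTensor Aᵐᵒᵖ (mul' K A) (LinearMap.mul K (Trip₁ K A) t (embR₁ K A ξ)) =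
      LinearMap.mul K (Env K A) (rTensor Aᵐᵒᵖ (mul' K A) t) ξ := by
  induction t using TensorProduct.induction_on with
  | zero => simp only [map_zero, LinearMap.zero_apply]
  | add x y hx hy => simp only [map_add, LinearMap.add_apply, hx, hy]
  | tmul s c =>
    induction ξ using TensorProduct.induction_on with
    | zero => simp only [map_zero]
    | add u v hu hv => simp only [map_add, hu, hv]
    | tmul a b =>
      induction s using TensorProduct.induction_on with
      | zero => simp only [zero_tmul, map_zero, LinearMap.zero_apply]
      | add u v hu hv => simp only [add_tmul, map_add, LinearMap.add_apply, hu, hv]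
      | tmul x y =>
        simp only [embR₁, rTensor_tmul, TensorProduct.mk_apply]
        rw [mulT₁_tmul]
        simp only [rTensor_tmul, LinearMap.mul'_apply]
        rw [mulE_tmul, mul_one, mul_assoc]

lemma m2_mul_embR (t : Trip₂ K A) (ξ : Env K A) :
    lTensor A (mul' K Aᵐᵒᵖ) (LinearMap.mul K (Trip₂ K A) t (embR₂ K A ξ)) =
      LinearMap.mul K (Env K A) (lTensor A (mul' K Aᵐᵒᵖ) t) ξ := by
  induction t using TensorProduct.induction_on with
  | zero => simp only [map_zero, LinearMap.zero_apply]
  | add x y hx hy => simp only [map_add, LinearMap.add_apply, hx, hy]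
  | tmul x s =>
    induction ξ using TensorProduct.induction_on with
    | zero => simp only [map_zero]
    | add u v hu hv => simp only [map_add, hu, hv]
    | tmul a b =>
      induction s using TensorProduct.induction_on with
      | zero => simp only [tmul_zero, map_zero, LinearMap.zero_apply]
      | add u v hu hv => simp only [tmul_add, map_add, LinearMap.add_apply, hu, hv]
      | tmul c e =>
        simp only [embR₂, lTensor_tmul, TensorProduct.mk_apply]
        rw [mulT₂_tmul]
        simp only [lTensor_tmul, LinearMap.mul'_apply]
        rw [mulE_tmul, mul_one, mul_assoc]

lemma m1_embL_mul (ξ : Env K A) (t : Trip₁ K A) :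
    rTensor Aᵐᵒᵖ (mul' K A) (LinearMap.mul K (Trip₁ K A) (embL₁ K A ξ) t) =
      LinearMap.mul K (Env K A) ξ (rTensor Aᵐᵒᵖ (mul' K A) t) := by
  induction t using TensorProduct.induction_on with
  | zero => simp only [map_zero]
  | add x y hx hy => simp only [map_add, hx, hy]
  | tmul s c =>
    induction ξ using TensorProduct.induction_on with
    | zero => simp only [map_zero, LinearMap.zero_apply]
    | add u v hu hv => simp only [map_add, LinearMap.add_apply, hu, hv]
    | tmul a b =>
      induction s using TensorProduct.induction_on with
      | zero => simp only [zero_tmul, map_zero, LinearMap.zero_apply, tmul_zero]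
      | add u v hu hv => simp only [add_tmul, map_add, LinearMap.add_apply, tmul_add, hu, hv]
      | tmul x y =>
        simp only [embL₁, rTensor_tmul, flip_apply, TensorProduct.mk_apply]
        rw [mulT₁_tmul]
        simp only [rTensor_tmul, LinearMap.mul'_apply]
        rw [mulE_tmul, one_mul, mul_assoc]

lemma m2_embL_mul (ξ : Env K A) (t : Trip₂ K A) :
    lTensor A (mul' K Aᵐᵒᵖ) (LinearMap.mul K (Trip₂ K A) (embL₂ K A ξ) t) =
      LinearMap.mul K (Env K A) ξ (lTensor A (mul' K Aᵐᵒᵖ) t) := by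
  induction t using TensorProduct.induction_on with
  | zero => simp only [map_zero]
  | add x y hx hy => simp only [map_add, hx, hy]
  | tmul x s =>
    induction ξ using TensorProduct.induction_on with
    | zero => simp only [map_zero, LinearMap.zero_apply]
    | add u v hu hv => simp only [map_add, LinearMap.add_apply, hu, hv]
    | tmul a b =>
      induction s using TensorProduct.induction_on with
      | zero => simp only [tmul_zero, map_zero, LinearMap.zero_apply]
      | add u v hu hv => simp only [tmul_add, map_add, LinearMap.add_apply, hu, hv]
      | tmul c e =>
        simp only [embL₂, lTensor_tmul, flip_apply, TensorProduct.mk_apply]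
        rw [mulT₂_tmul]
        simp only [lTensor_tmul, LinearMap.mul'_apply]
        rw [mulE_tmul, one_mul, mul_assoc]

end Aux

section Aux2

set_option linter.unusedSectionVars false

variable {K A}

lemma bridge₁ (a b : Trip₁ K A) : mulLeft K a b = LinearMap.mul K (Trip₁ K A) a b := rfl

lemma bridge₂ (a b : Trip₂ K A) : mulLeft K a b = LinearMap.mul K (Trip₂ K A) a b := rfl

lemma bridgeE (a b : Env K A) : mulLeft K a b = LinearMap.mul K (Env K A) a b := rfl

lemma mul'op_comm_map (w : A ⊗[K] A) :
    mul' K Aᵐᵒᵖ ((TensorProduct.comm K Aᵐᵒᵖ Aᵐᵒᵖ)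
      (TensorProduct.map (opLinearEquiv K).toLinearMap (opLinearEquiv K).toLinearMap w)) =
      op (mul' K A w) := by
  induction w using TensorProduct.induction_on with
  | zero => simp
  | add u v hu hv => simp only [map_add, hu, hv, op_add]
  | tmul p q =>
    simp only [map_tmul, comm_tmul, LinearEquiv.coe_coe, coe_opLinearEquiv,
      LinearMap.mul'_apply]
    exact (op_mul p q).symm

lemma mul'_ddOp (Θ : A →ₗ[K] A ⊗[K] A) (e : Aᵐᵒᵖ) :
    mul' K Aᵐᵒᵖ (ddOp K A Θ e) = op (mul' K A (Θ (unop e))) := by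
  simp only [ddOp, comp_apply, LinearEquiv.coe_coe]
  rw [show ((opLinearEquiv K (M := A)).symm e) = unop e from rfl]
  exact mul'op_comm_map (Θ (unop e))

lemma contr_mult (Θ : A →ₗ[K] A ⊗[K] A) (z : Env K A ⊗[K] Env K A) :
    rTensor Aᵐᵒᵖ (mul' K A) (contrT₁ K A Θ z) + lTensor A (mul' K Aᵐᵒᵖ) (contrT₂ K A Θ z) =
      contrE K A (mul' K A ∘ₗ Θ) z := by
  induction z using TensorProduct.induction_on with
  | zero => simp
  | add u v hu hv =>
    simp only [map_add]
    rw [add_add_add_comm, hu, hv]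
  | tmul ξ η =>
    simp only [contrT₁, contrT₂, contrE, lift.tmul, compl₂_apply, comp_apply]
    rw [m1_embL_mul, m2_embL_mul]
    rw [← map_add (LinearMap.mul K (Env K A) ξ)]
    congr 1
    simp only [LinearMap.add_apply]
    induction η using TensorProduct.induction_on with
    | zero => simp
    | add u v hu hv =>
      simp only [map_add]
      rw [add_add_add_comm, hu, hv, add_add_add_comm]
    | tmul c e =>
      simp only [thetaE₁, thetaE₂, rTensor_tmul, lTensor_tmul, comp_apply,
        LinearEquiv.coe_coe, coe_opLinearEquiv]
      rw [mul'_ddOp]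
      rfl

end Aux2


section Aux3

set_option linter.unusedSectionVars false

variable {K A}
variable {Ω : Type*} [AddCommGroup Ω] [Module K Ω] [Module (Env K A) Ω]
  [IsScalarTower K (Env K A) Ω] [SMulCommClass (Env K A) K Ω]

/-- The action map `Aᵉ ⊗ Ω → Ω`. -/
def actO : Env K A ⊗[K] Ω →ₗ[K] Ω :=
  TensorProduct.lift (LinearMap.mk₂ K (fun ξ ω => ξ • ω)
    (fun ξ η ω => add_smul ξ η ω) (fun k ξ ω => smul_assoc k ξ ω)
    (fun ξ ω ω' => smul_add ξ ω ω') (fun ξ k ω => smul_comm k ξ ω))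

@[simp] lemma actO_tmul (ξ : Env K A) (ω : Ω) : actO (ξ ⊗ₜ[K] ω) = ξ • ω := rfl

lemma trace1 (g : Ω →ₗ[K] Env K A) (z : Trip₁ K A ⊗[K] Ω) :
    rTensor Aᵐᵒᵖ (mul' K A)
        (TensorProduct.lift ((LinearMap.mul K (Trip₁ K A)).compl₂ (embR₁ K A ∘ₗ g)) z) =
      TensorProduct.lift ((LinearMap.mul K (Env K A)).compl₂ g)
        (rTensor Ω (rTensor Aᵐᵒᵖ (mul' K A)) z) := by
  induction z using TensorProduct.induction_on with
  | zero => simp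
  | add u v hu hv => simp only [map_add, hu, hv]
  | tmul t ω =>
    simp only [lift.tmul, compl₂_apply, comp_apply, rTensor_tmul]
    exact m1_mul_embR t (g ω)

lemma trace2 (g : Ω →ₗ[K] Env K A) (z : Trip₂ K A ⊗[K] Ω) :
    lTensor A (mul' K Aᵐᵒᵖ)
        (TensorProduct.lift ((LinearMap.mul K (Trip₂ K A)).compl₂ (embR₂ K A ∘ₗ g)) z) =
      TensorProduct.lift ((LinearMap.mul K (Env K A)).compl₂ g)
        (rTensor Ω (lTensor A (mul' K Aᵐᵒᵖ)) z) := by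
  induction z using TensorProduct.induction_on with
  | zero => simp
  | add u v hu hv => simp only [map_add, hu, hv]
  | tmul t ω =>
    simp only [lift.tmul, compl₂_apply, comp_apply, rTensor_tmul]
    exact m2_mul_embR t (g ω)

lemma actlift (e : Ω →ₗ[Env K A] Env K A) (z : Env K A ⊗[K] Ω) :
    TensorProduct.lift ((LinearMap.mul K (Env K A)).compl₂ (e.restrictScalars K)) z =
      e (actO z) := by
  induction z using TensorProduct.induction_on with
  | zero => simp
  | add u v hu hv => simp only [map_add, hu, hv]
  | tmul x ω =>
    simp only [lift.tmul, compl₂_apply, coe_restrictScalars, actO_tmul, map_smul]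
    exact (LinearMap.mul_apply' _ _).trans (smul_eq_mul _ _).symm

lemma equiv1 (ξ : Env K A) (z : Trip₁ K A ⊗[K] Ω) :
    rTensor Ω (rTensor Aᵐᵒᵖ (mul' K A)) (rTensor Ω (mulLeft K (embL₁ K A ξ)) z) =
      rTensor Ω (mulLeft K ξ) (rTensor Ω (rTensor Aᵐᵒᵖ (mul' K A)) z) := by
  induction z using TensorProduct.induction_on with
  | zero => simp
  | add u v hu hv => simp only [map_add, hu, hv]
  | tmul t ω =>
    simp only [rTensor_tmul]
    rw [bridge₁, bridgeE, m1_embL_mul]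

lemma equiv2 (ξ : Env K A) (z : Trip₂ K A ⊗[K] Ω) :
    rTensor Ω (lTensor A (mul' K Aᵐᵒᵖ)) (rTensor Ω (mulLeft K (embL₂ K A ξ)) z) =
      rTensor Ω (mulLeft K ξ) (rTensor Ω (lTensor A (mul' K Aᵐᵒᵖ)) z) := by
  induction z using TensorProduct.induction_on with
  | zero => simp
  | add u v hu hv => simp only [map_add, hu, hv]
  | tmul t ω =>
    simp only [rTensor_tmul]
    rw [bridge₂, bridgeE, m2_embL_mul]

lemma actO_mulLeft (ξ : Env K A) (z : Env K A ⊗[K] Ω) :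
    actO (rTensor Ω (mulLeft K ξ) z) = ξ • actO z := by
  induction z using TensorProduct.induction_on with
  | zero => simp
  | add u v hu hv => simp only [map_add, hu, hv, smul_add]
  | tmul x ω =>
    simp only [rTensor_tmul, actO_tmul, mulLeft_apply]
    exact mul_smul ξ x ω

end Aux3
/-- (`|mult| ∘ TDiv^∇ = Div^∇ ∘ mult⁎`.)  Let `A` be formally smooth over
`S` (witnessed by the `Aᵉ`-module `Ω = Ω¹_S A` with universal derivation `d` and a finite
dual basis), `∇` an (`Sᵉ`-linear) connection on `Ω`, and `Θ` an `S`-linear double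
derivation with associated derivation `f = mult ∘ Θ`.  Writing
`TDiv^∇(Θ) = Tr(i_{Θᵉ}∇ − L_Θ) ∈ |trip(A)|` and `Div^∇(f) = Tr((i_{fᵉ}⊗id)∇ − L_f) ∈ |Aᵉ|`
(traces computed with the dual basis), the triple divergence lifts the double divergence:
`|mult|(TDiv^∇ Θ) = Div^∇ f`. -/
theorem stmt9 (S : Subalgebra K A)
    (Ω : Type*) [AddCommGroup Ω] [Module K Ω] [Module (Env K A) Ω]
    [IsScalarTower K (Env K A) Ω] [SMulCommClass (Env K A) K Ω]
    -- the universal `S`-linear derivation `d : A → Ω`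
    (d : A →ₗ[K] Ω)
    (hd : ∀ a b : A, d (a * b) =
      (a ⊗ₜ[K] (1 : Aᵐᵒᵖ)) • d b + ((1 : A) ⊗ₜ[K] op b) • d a)
    (hdS : ∀ s ∈ S, d s = 0)
    (hgen : Submodule.span (Env K A) (Set.range ⇑d) = ⊤)
    -- `Ω` is finitely generated projective over `Aᵉ`: a finite dual basis
    (r : ℕ) (bas : Fin r → Ω) (ε : Fin r → (Ω →ₗ[Env K A] Env K A))
    (hdual : ∀ ω : Ω, ∑ i, ε i ω • bas i = ω)
    -- the connection `∇ : Ω → Ω¹Aᵉ ⊗_{Aᵉ} Ω` (representative level) with its Leibniz rule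
    (conn : Ω →ₗ[K] (Env K A ⊗[K] Env K A) ⊗[K] Ω)
    (hconn : ∀ (ξ : Env K A) (ω : Ω),
      conn (ξ • ω) = (dEnv K A ξ) ⊗ₜ[K] ω +
        (rTensor Ω (rTensor (Env K A) (mulLeft K ξ))) (conn ω))
    -- the `S`-linear double derivation `Θ` and `f = mult ∘ Θ`
    (Θ : A →ₗ[K] A ⊗[K] A)
    (hΘ : ∀ a b : A, Θ (a * b) = Θ a * ((1 : A) ⊗ₜ[K] b) + (a ⊗ₜ[K] (1 : A)) * Θ b)
    (hΘS : ∀ s ∈ S, Θ s = 0)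
    -- the double Lie derivative `L_Θ : Ω → trip(A) ⊗_{Aᵉ} Ω ≅ (A⊗Ω) ⊕ (Ω⊗A)`,
    -- characterised on generators `a₀ d a₁` by the usual three-term formula
    (LΘ₁ : Ω →ₗ[K] Trip₁ K A ⊗[K] Ω) (LΘ₂ : Ω →ₗ[K] Trip₂ K A ⊗[K] Ω)
    (hLΘ₁ : ∀ a₀ a₁ : A,
      LΘ₁ ((a₀ ⊗ₜ[K] (1 : Aᵐᵒᵖ)) • d a₁) =
        (rTensor Ω (jay₁ K A))
          ((lTensor A (smulOn (d a₁) ∘ₗ inclE K A)) (Θ a₀) +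
            (TensorProduct.map (mulLeft K a₀) d) (Θ a₁)))
    (hLΘ₂ : ∀ a₀ a₁ : A,
      LΘ₂ ((a₀ ⊗ₜ[K] (1 : Aᵐᵒᵖ)) • d a₁) =
        (rTensor Ω (jay₂ K A))
          ((TensorProduct.comm K Ω A)
            ((rTensor A (smulFix (a₀ ⊗ₜ[K] (1 : Aᵐᵒᵖ)) ∘ₗ d)) (Θ a₁))))
    -- the ordinary Lie derivative `L_f : Ω → Aᵉ ⊗_{Aᵉ} Ω`, `L_f(a₀da₁) = f(a₀)da₁ + a₀df(a₁)`
    (Lf : Ω →ₗ[K] Env K A ⊗[K] Ω)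
    (hLf : ∀ a₀ a₁ : A,
      Lf ((a₀ ⊗ₜ[K] (1 : Aᵐᵒᵖ)) • d a₁) =
        (1 : Env K A) ⊗ₜ[K]
          (((mul' K A (Θ a₀)) ⊗ₜ[K] (1 : Aᵐᵒᵖ)) • d a₁ +
            (a₀ ⊗ₜ[K] (1 : Aᵐᵒᵖ)) • d (mul' K A (Θ a₁))))
    -- `i_{Θᵉ}∇ − L_Θ` and `i_{fᵉ}∇ − L_f` are `Aᵉ`-linear
    (hD₁ : ∀ (ξ : Env K A) (ω : Ω),
      ((rTensor Ω (contrT₁ K A Θ)) ∘ₗ conn - LΘ₁) (ξ • ω) =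
        (rTensor Ω (mulLeft K (embL₁ K A ξ)))
          (((rTensor Ω (contrT₁ K A Θ)) ∘ₗ conn - LΘ₁) ω))
    (hD₂ : ∀ (ξ : Env K A) (ω : Ω),
      ((rTensor Ω (contrT₂ K A Θ)) ∘ₗ conn - LΘ₂) (ξ • ω) =
        (rTensor Ω (mulLeft K (embL₂ K A ξ)))
          (((rTensor Ω (contrT₂ K A Θ)) ∘ₗ conn - LΘ₂) ω))
    (hDE : ∀ (ξ : Env K A) (ω : Ω),
      ((rTensor Ω (contrE K A (mul' K A ∘ₗ Θ))) ∘ₗ conn - Lf) (ξ • ω) =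
        (rTensor Ω (mulLeft K ξ))
          (((rTensor Ω (contrE K A (mul' K A ∘ₗ Θ))) ∘ₗ conn - Lf) ω)) :
    -- conclusion: `|mult|(TDiv^∇ Θ) = Div^∇(mult ∘ Θ)` in `|Aᵉ|`
    Submodule.Quotient.mk (p := envComm K A)
        (multTrip K A
          (∑ i, (TensorProduct.lift ((LinearMap.mul K (Trip₁ K A)).compl₂
              (embR₁ K A ∘ₗ (ε i).restrictScalars K)))
            ((((rTensor Ω (contrT₁ K A Θ)) ∘ₗ conn - LΘ₁)) (bas i)),
           ∑ i, (TensorProduct.lift ((LinearMap.mul K (Trip₂ K A)).compl₂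
              (embR₂ K A ∘ₗ (ε i).restrictScalars K)))
            ((((rTensor Ω (contrT₂ K A Θ)) ∘ₗ conn - LΘ₂)) (bas i)))) =
      Submodule.Quotient.mk (p := envComm K A)
        (∑ i, (TensorProduct.lift ((LinearMap.mul K (Env K A)).compl₂
            ((ε i).restrictScalars K)))
          ((((rTensor Ω (contrE K A (mul' K A ∘ₗ Θ))) ∘ₗ conn - Lf)) (bas i))) := by


  -- `Θ 1 = 0`
  have hΘ1 : Θ (1 : A) = 0 := by
    have h := hΘ 1 1
    rw [mul_one] at h
    have e1 : Θ (1 : A) * ((1 : A) ⊗ₜ[K] (1 : A)) = Θ (1 : A) := by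
      rw [show ((1 : A) ⊗ₜ[K] (1 : A)) = (1 : A ⊗[K] A) from rfl]
      exact mul_one _
    have e2 : ((1 : A) ⊗ₜ[K] (1 : A)) * Θ (1 : A) = Θ (1 : A) := by
      rw [show ((1 : A) ⊗ₜ[K] (1 : A)) = (1 : A ⊗[K] A) from rfl]
      exact one_mul _
    rw [e1, e2] at h
    exact left_eq_add.mp h
  have honesmul : ∀ x : Ω, ((1 : A) ⊗ₜ[K] (1 : Aᵐᵒᵖ)) • x = x := fun x => by
    rw [show ((1 : A) ⊗ₜ[K] (1 : Aᵐᵒᵖ)) = (1 : Env K A) from rfl]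
    exact one_smul _ x
  have honesmulE : ∀ x : Ω, (1 : Env K A) • x = x := fun x => one_smul _ x
  set D₁ : Ω →ₗ[K] Trip₁ K A ⊗[K] Ω := (rTensor Ω (contrT₁ K A Θ)) ∘ₗ conn - LΘ₁ with hD₁def
  set D₂ : Ω →ₗ[K] Trip₂ K A ⊗[K] Ω := (rTensor Ω (contrT₂ K A Θ)) ∘ₗ conn - LΘ₂ with hD₂def
  set DE : Ω →ₗ[K] Env K A ⊗[K] Ω :=
    (rTensor Ω (contrE K A (mul' K A ∘ₗ Θ))) ∘ₗ conn - Lf with hDEdef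
  -- the main pointwise identity
  have hmain : ∀ ω : Ω,
      actO (rTensor Ω (rTensor Aᵐᵒᵖ (mul' K A)) (D₁ ω)) +
        actO (rTensor Ω (lTensor A (mul' K Aᵐᵒᵖ)) (D₂ ω)) = actO (DE ω) := by
    have hconnpart : ∀ x : (Env K A ⊗[K] Env K A) ⊗[K] Ω,
        actO (rTensor Ω (rTensor Aᵐᵒᵖ (mul' K A)) (rTensor Ω (contrT₁ K A Θ) x)) +
          actO (rTensor Ω (lTensor A (mul' K Aᵐᵒᵖ)) (rTensor Ω (contrT₂ K A Θ) x)) =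
          actO (rTensor Ω (contrE K A (mul' K A ∘ₗ Θ)) x) := by
      intro x
      induction x using TensorProduct.induction_on with
      | zero => simp
      | add u v hu hv =>
        simp only [map_add]
        rw [add_add_add_comm, hu, hv]
      | tmul w ω =>
        simp only [rTensor_tmul, actO_tmul]
        rw [← contr_mult Θ w, add_smul]
    have hsf : smulFix ((1 : A) ⊗ₜ[K] (1 : Aᵐᵒᵖ)) ∘ₗ d = d := by
      ext x
      exact honesmul (d x)
    have hLpart : ∀ a : A,
        actO (rTensor Ω (rTensor Aᵐᵒᵖ (mul' K A)) (LΘ₁ (d a))) +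
          actO (rTensor Ω (lTensor A (mul' K Aᵐᵒᵖ)) (LΘ₂ (d a))) = actO (Lf (d a)) := by
      intro a
      have h1 := hLΘ₁ 1 a
      have h2 := hLΘ₂ 1 a
      have h3 := hLf 1 a
      rw [honesmul (d a)] at h1 h2 h3
      rw [hΘ1, map_zero, zero_add, mulLeft_one] at h1
      rw [hsf] at h2
      rw [hΘ1, map_zero] at h3
      rw [zero_tmul] at h3
      rw [show (0 : A ⊗[K] Aᵐᵒᵖ) • d a = 0 from map_zero (smulOn (d a))] at h3
      rw [zero_add, honesmul] at h3
      rw [h1, h2, h3]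
      generalize Θ a = u
      induction u using TensorProduct.induction_on with
      | zero => simp
      | add u v hu hv =>
        simp only [map_add, tmul_add]
        rw [add_add_add_comm, hu, hv]
      | tmul p q =>
        simp only [TensorProduct.map_tmul, id_coe, id_eq, rTensor_tmul, comm_tmul,
          lTensor_tmul, comp_apply, flip_apply, TensorProduct.mk_apply, jay₁, jay₂,
          LinearEquiv.coe_coe, coe_opLinearEquiv, LinearMap.mul'_apply, actO_tmul,
          mul_one, one_mul]
        rw [hd p q]
        exact (honesmulE _).symm
    intro ω
    have hω : ω ∈ Submodule.span (Env K A) (Set.range ⇑d) := by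
      rw [hgen]; trivial
    induction hω using Submodule.span_induction with
    | mem x hx =>
      obtain ⟨a, rfl⟩ := hx
      rw [hD₁def, hD₂def, hDEdef]
      simp only [LinearMap.sub_apply, LinearMap.comp_apply, map_sub]
      rw [sub_add_sub_comm]
      exact congrArg₂ (· - ·) (hconnpart (conn (d a))) (hLpart a)
    | zero => simp
    | add x y hx hy hpx hpy =>
      simp only [map_add]
      rw [add_add_add_comm, hpx, hpy]
    | smul ξ x hx hpx =>
      rw [hD₁ ξ x, hD₂ ξ x, hDE ξ x, equiv1, equiv2, actO_mulLeft, actO_mulLeft,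
        actO_mulLeft, ← smul_add, hpx]
  -- assemble the trace identity
  refine congrArg (Submodule.Quotient.mk (p := envComm K A)) ?_
  rw [multTrip, coprod_apply, map_sum, map_sum, ← Finset.sum_add_distrib]
  refine Finset.sum_congr rfl fun i _ => ?_
  rw [trace1, trace2, actlift, actlift, actlift, ← map_add]
  exact congrArg (ε i) (hmain (bas i))

end
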